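/- Suppose the triple (X, X(u), 𝒞) exhibits the cyclic sieving phenomenon, where 𝒞 = C_1 × ⋯ × C_m is a product of finite cyclic groups with injective characters ω_i : C_i → ℂ^× and X(u) is a Laurent polynomial in u = (u_1,…,u_m) with nonnegative integer coefficients. Fix nonnegative integers m', k. Then the triple consisting of the set of k-element multisubsets of the set of m'-element multisubsets of X (with its induced 𝒞-action), the Laurent polynomial h_k[ h_{m'}[ X(u) ] ], and the group 𝒞, also exhibits the cyclic sieving phenomenon. -/

import Mathlib

set_option linter.unusedSectionVars false

open Finset Function

section aux

variable {Y : Type} [Fintype Y] [DecidableEq Y]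

lemma multiset_map_eq_self_iff (σ : Equiv.Perm Y) (M : Multiset Y) :
    M.map ⇑σ = M ↔ ∀ z, M.count (σ z) = M.count z := by
  constructor
  · intro h z
    conv_lhs => rw [← h]
    exact Multiset.count_map_eq_count' _ _ σ.injective z
  · intro h
    ext w
    rw [← Equiv.apply_symm_apply σ w, Multiset.count_map_eq_count' _ _ σ.injective]
    exact (h _).symm

lemma sym_fixed_iff (σ : Equiv.Perm Y) {k : ℕ} (S : Sym Y k) :
    Sym.map ⇑σ S = S ↔ ∀ z, (S : Multiset Y).count (σ z) = (S : Multiset Y).count z := by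
  rw [← multiset_map_eq_self_iff]
  constructor
  · intro h; rw [← Sym.coe_map, h]
  · intro h; exact Sym.coe_injective (by rw [Sym.coe_map, h])

lemma perm_periodic (σ : Equiv.Perm Y) (y : Y) : y ∈ periodicPts ⇑σ := by
  refine ⟨orderOf σ, orderOf_pos σ, ?_⟩
  show (⇑σ)^[orderOf σ] y = y
  rw [Equiv.Perm.iterate_eq_pow, pow_orderOf_eq_one]
  rfl

noncomputable def ell (σ : Equiv.Perm Y) (y : Y) : ℕ := minimalPeriod ⇑σ y

noncomputable def Orb (σ : Equiv.Perm Y) (y : Y) : Multiset Y :=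
  ((List.range (ell σ y)).map (fun i => (⇑σ)^[i] y) : List Y)

lemma ell_pos (σ : Equiv.Perm Y) (y : Y) : 0 < ell σ y :=
  minimalPeriod_pos_of_mem_periodicPts (perm_periodic σ y)

lemma card_Orb (σ : Equiv.Perm Y) (y : Y) : Multiset.card (Orb σ y) = ell σ y := by
  simp [Orb]

lemma nodup_Orb (σ : Equiv.Perm Y) (y : Y) : (Orb σ y).Nodup := by
  have h := Function.nodup_periodicOrbit (f := ⇑σ) (x := y)
  rw [periodicOrbit_def, Cycle.nodup_coe_iff] at h
  exact h

lemma mem_Orb_self (σ : Equiv.Perm Y) (y : Y) : y ∈ Orb σ y := by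
  have : (⇑σ)^[0] y = y := rfl
  simp only [Orb, Multiset.mem_coe, List.mem_map, List.mem_range]
  exact ⟨0, ell_pos σ y, this⟩

lemma map_Orb (σ : Equiv.Perm Y) (y : Y) : (Orb σ y).map ⇑σ = Orb σ y := by
  obtain ⟨m, hm⟩ : ∃ m, ell σ y = m + 1 := ⟨ell σ y - 1, by have := ell_pos σ y; omega⟩
  have hper : (⇑σ)^[m+1] y = y := by
    rw [← hm]; exact iterate_minimalPeriod
  unfold Orb
  rw [hm]
  rw [Multiset.map_coe, List.map_map]
  have h1 : (fun i => (⇑σ)^[i] y) ∘ Nat.succ = ⇑σ ∘ (fun i => (⇑σ)^[i] y) := by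
    funext i; exact Function.iterate_succ_apply' _ _ _
  have h2 : ((List.range (m+1)).map (⇑σ ∘ fun i => (⇑σ)^[i] y) : Multiset Y)
      = ((List.range (m+1)).map ((fun i => (⇑σ)^[i] y) ∘ Nat.succ) : Multiset Y) := by
    rw [h1]
  rw [h2]
  -- now rotation
  have hl : (List.range (m+1)).map ((fun i => (⇑σ)^[i] y) ∘ Nat.succ)
      = ((List.range m).map ((fun i => (⇑σ)^[i] y) ∘ Nat.succ)) ++ [(⇑σ)^[m+1] y] := by
    rw [List.range_succ, List.map_append]; rfl
  have hr : (List.range (m+1)).map (fun i => (⇑σ)^[i] y)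
      = y :: ((List.range m).map ((fun i => (⇑σ)^[i] y) ∘ Nat.succ)) := by
    rw [List.range_succ_eq_map, List.map_cons, List.map_map]
    rfl
  rw [hl, hr, hper]
  exact Multiset.coe_eq_coe.mpr (List.perm_append_singleton _ _)

lemma count_Orb_fixed (σ : Equiv.Perm Y) (y z : Y) :
    (Orb σ y).count (σ z) = (Orb σ y).count z :=
  (multiset_map_eq_self_iff σ _).mp (map_Orb σ y) z

lemma count_Orb_self (σ : Equiv.Perm Y) (y : Y) : (Orb σ y).count y = 1 :=
  Multiset.count_eq_one_of_mem (nodup_Orb σ y) (mem_Orb_self σ y)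

lemma count_const_on_Orb (σ : Equiv.Perm Y) (y : Y) (M : Multiset Y)
    (hM : ∀ z, M.count (σ z) = M.count z) (i : ℕ) :
    M.count ((⇑σ)^[i] y) = M.count y := by
  induction i with
  | zero => rfl
  | succ i ih => rw [Function.iterate_succ_apply', hM, ih]

lemma smul_Orb_le (σ : Equiv.Perm Y) (y : Y) (M : Multiset Y) (q : ℕ)
    (hM : ∀ z, M.count (σ z) = M.count z) (hq : q ≤ M.count y) :
    q • Orb σ y ≤ M := by
  rw [Multiset.le_iff_count]
  intro z
  rw [Multiset.count_nsmul]
  by_cases hz : z ∈ Orb σ y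
  · rw [Multiset.count_eq_one_of_mem (nodup_Orb σ y) hz, mul_one]
    obtain ⟨i, -, rfl⟩ : ∃ i, i ∈ List.range (ell σ y) ∧ (⇑σ)^[i] y = z := by
      simpa only [Orb, Multiset.mem_coe, List.mem_map] using hz
    rw [count_const_on_Orb σ y M hM]
    exact hq
  · rw [Multiset.count_eq_zero_of_notMem hz, mul_zero]
    exact Nat.zero_le _

/-- The key bijection: fixed `k`-multisets with at least `q` copies of `y`
correspond to fixed `(k - q·ℓ)`-multisets. -/
lemma card_filter_count_ge (σ : Equiv.Perm Y) (y : Y) (q k : ℕ)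
    (hk : q * ell σ y ≤ k) :
    (Finset.univ.filter fun S : Sym Y k =>
        Sym.map ⇑σ S = S ∧ q ≤ (S : Multiset Y).count y).card =
    (Finset.univ.filter fun T : Sym Y (k - q * ell σ y) => Sym.map ⇑σ T = T).card := by
  have hcardO : Multiset.card (q • Orb σ y) = q * ell σ y := by
    rw [Multiset.card_nsmul, card_Orb]
  have hfixO : ∀ z, (q • Orb σ y).count (σ z) = (q • Orb σ y).count z := by
    intro z; rw [Multiset.count_nsmul, Multiset.count_nsmul, count_Orb_fixed]
  refine Finset.card_bij'
    (fun S hS => (⟨(S : Multiset Y) - q • Orb σ y, ?_⟩ : Sym Y (k - q * ell σ y)))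
    (fun T hT => (⟨(T : Multiset Y) + q • Orb σ y, ?_⟩ : Sym Y k)) ?_ ?_ ?_ ?_
  case refine_1 =>
    rw [Finset.mem_filter] at hS
    have hle : q • Orb σ y ≤ (S : Multiset Y) :=
      smul_Orb_le σ y _ q ((sym_fixed_iff σ S).mp hS.2.1) hS.2.2
    rw [Multiset.card_sub hle, hcardO, Sym.card_coe (s := S)]
  case refine_2 =>
    rw [Finset.mem_filter] at hT
    rw [Multiset.card_add, hcardO, Sym.card_coe (s := T)]
    omega
  case refine_3 =>
    intro S hS
    rw [Finset.mem_filter] at hS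
    apply Finset.mem_filter.mpr
    refine ⟨Finset.mem_univ _, ?_⟩
    apply (sym_fixed_iff σ _).mpr
    intro z
    show ((S : Multiset Y) - q • Orb σ y).count (σ z) = ((S : Multiset Y) - q • Orb σ y).count z
    rw [Multiset.count_sub, Multiset.count_sub, (sym_fixed_iff σ S).mp hS.2.1 z, hfixO z]
  case refine_4 =>
    intro T hT
    rw [Finset.mem_filter] at hT
    apply Finset.mem_filter.mpr
    refine ⟨Finset.mem_univ _, ?_, ?_⟩
    · apply (sym_fixed_iff σ _).mpr
      intro z
      show ((T : Multiset Y) + q • Orb σ y).count (σ z) = ((T : Multiset Y) + q • Orb σ y).count z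
      rw [Multiset.count_add, Multiset.count_add, (sym_fixed_iff σ T).mp hT.2 z, hfixO z]
    · show q ≤ ((T : Multiset Y) + q • Orb σ y).count y
      rw [Multiset.count_add, Multiset.count_nsmul, count_Orb_self, mul_one]
      omega
  case refine_5 =>
    intro S hS
    rw [Finset.mem_filter] at hS
    have hle : q • Orb σ y ≤ (S : Multiset Y) :=
      smul_Orb_le σ y _ q ((sym_fixed_iff σ S).mp hS.2.1) hS.2.2
    exact Subtype.ext (tsub_add_cancel_of_le hle)
  case refine_6 =>
    intro T hT
    exact Subtype.ext (add_tsub_cancel_right _ _)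

lemma card_filter_count_ge_zero (σ : Equiv.Perm Y) (y : Y) (q k : ℕ)
    (hk : ¬ q * ell σ y ≤ k) :
    (Finset.univ.filter fun S : Sym Y k =>
        Sym.map ⇑σ S = S ∧ q ≤ (S : Multiset Y).count y).card = 0 := by
  rw [Finset.card_eq_zero, Finset.filter_eq_empty_iff]
  rintro S - ⟨hfix, hq⟩
  have hle : q • Orb σ y ≤ (S : Multiset Y) :=
    smul_Orb_le σ y _ q ((sym_fixed_iff σ S).mp hfix) hq
  have := Multiset.card_le_card hle
  rw [Multiset.card_nsmul, card_Orb, Sym.card_coe (s := S)] at this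
  exact hk this

lemma sum_count_univ (M : Multiset Y) : ∑ y : Y, M.count y = Multiset.card M := by
  rw [← Multiset.toFinset_sum_count_eq]
  exact (Finset.sum_subset (Finset.subset_univ _) (fun y _ hy =>
    Multiset.count_eq_zero_of_notMem (by simpa [Multiset.mem_toFinset] using hy))).symm

/-- Newton-type recurrence for counts of fixed multisets. -/
lemma fix_recurrence (σ : Equiv.Perm Y) (k : ℕ) :
    k * (Finset.univ.filter fun S : Sym Y k => Sym.map ⇑σ S = S).card =
    ∑ r ∈ Finset.Icc 1 k,
      (Finset.univ.filter fun y : Y => (σ ^ r) y = y).card *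
      (Finset.univ.filter fun T : Sym Y (k - r) => Sym.map ⇑σ T = T).card := by
  -- LHS as a double sum
  have lhs_eq : k * (Finset.univ.filter fun S : Sym Y k => Sym.map ⇑σ S = S).card
      = ∑ y : Y, ∑ q ∈ Finset.Icc 1 k,
          (Finset.univ.filter fun S : Sym Y k =>
            Sym.map ⇑σ S = S ∧ q ≤ (S : Multiset Y).count y).card := by
    rw [mul_comm, Finset.card_eq_sum_ones (Finset.univ.filter _), Finset.sum_mul, one_mul]
    have step1 : ∀ S ∈ (Finset.univ.filter fun S : Sym Y k => Sym.map ⇑σ S = S),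
        k = ∑ y : Y, (S : Multiset Y).count y := by
      intro S _
      rw [sum_count_univ, Sym.card_coe]
    rw [Finset.sum_congr rfl step1, Finset.sum_comm]
    refine Finset.sum_congr rfl fun y _ => ?_
    have step2 : ∀ S ∈ (Finset.univ.filter fun S : Sym Y k => Sym.map ⇑σ S = S),
        (S : Multiset Y).count y
        = ∑ q ∈ Finset.Icc 1 k, if q ≤ (S : Multiset Y).count y then 1 else 0 := by
      intro S hS
      have hc : (S : Multiset Y).count y ≤ k := by
        have h1 := Multiset.count_le_card y (S : Multiset Y)
        rwa [Sym.card_coe (s := S)] at h1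
      rw [← Finset.card_filter]
      have hfe : (Finset.Icc 1 k).filter (fun q => q ≤ (S : Multiset Y).count y)
          = Finset.Icc 1 ((S : Multiset Y).count y) := by
        ext q
        simp only [Finset.mem_filter, Finset.mem_Icc]
        omega
      rw [hfe, Nat.card_Icc]
      omega
    rw [Finset.sum_congr rfl step2, Finset.sum_comm]
    refine Finset.sum_congr rfl fun q _ => ?_
    rw [← Finset.card_filter, Finset.filter_filter]
  rw [lhs_eq]
  -- RHS as a double sum
  have rhs_eq : ∀ r, (Finset.univ.filter fun y : Y => (σ ^ r) y = y).card
      = ∑ y : Y, if ell σ y ∣ r then 1 else 0 := by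
    intro r
    rw [Finset.card_filter]
    refine Finset.sum_congr rfl fun y _ => ?_
    congr 1
    rw [eq_iff_iff]
    have : (σ ^ r) y = y ↔ IsPeriodicPt ⇑σ r y := by
      unfold IsPeriodicPt IsFixedPt
      rw [Equiv.Perm.iterate_eq_pow]
    rw [this, isPeriodicPt_iff_minimalPeriod_dvd]
    rfl
  have rhs2 : (∑ r ∈ Finset.Icc 1 k,
        (Finset.univ.filter fun y : Y => (σ ^ r) y = y).card *
        (Finset.univ.filter fun T : Sym Y (k - r) => Sym.map ⇑σ T = T).card)
      = ∑ y : Y, ∑ r ∈ Finset.Icc 1 k, (if ell σ y ∣ r then 1 else 0) *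
        (Finset.univ.filter fun T : Sym Y (k - r) => Sym.map ⇑σ T = T).card := by
    rw [Finset.sum_congr rfl (fun r (_ : r ∈ Finset.Icc 1 k) => by rw [rhs_eq r, Finset.sum_mul])]
    exact Finset.sum_comm
  rw [rhs2]
  refine Finset.sum_congr rfl fun y _ => ?_
  -- per-point identity
  calc ∑ q ∈ Finset.Icc 1 k,
        (Finset.univ.filter fun S : Sym Y k =>
          Sym.map ⇑σ S = S ∧ q ≤ (S : Multiset Y).count y).card
      = ∑ q ∈ Finset.Icc 1 k, if q * ell σ y ≤ k then
          (Finset.univ.filter fun T : Sym Y (k - q * ell σ y) => Sym.map ⇑σ T = T).card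
          else 0 := by
        refine Finset.sum_congr rfl fun q _ => ?_
        by_cases h : q * ell σ y ≤ k
        · rw [if_pos h, card_filter_count_ge σ y q k h]
        · rw [if_neg h, card_filter_count_ge_zero σ y q k h]
    _ = ∑ q ∈ (Finset.Icc 1 k).filter (fun q => q * ell σ y ≤ k),
          (Finset.univ.filter fun T : Sym Y (k - q * ell σ y) => Sym.map ⇑σ T = T).card := by
        rw [Finset.sum_filter]
    _ = ∑ r ∈ (Finset.Icc 1 k).filter (fun r => ell σ y ∣ r),
          (Finset.univ.filter fun T : Sym Y (k - r) => Sym.map ⇑σ T = T).card := by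
        have hl := ell_pos σ y
        refine Finset.sum_nbij' (fun q => q * ell σ y) (fun r => r / ell σ y) ?_ ?_ ?_ ?_ ?_
        · intro q hq
          simp only [Finset.mem_filter, Finset.mem_Icc] at hq ⊢
          refine ⟨⟨?_, ?_⟩, Dvd.intro_left q rfl⟩ <;> nlinarith [hq.1.1, hq.1.2, hq.2]
        · intro r hr
          simp only [Finset.mem_filter, Finset.mem_Icc] at hr ⊢
          obtain ⟨⟨h1, h2⟩, c, rfl⟩ := hr
          rw [Nat.mul_div_cancel_left c hl]
          refine ⟨⟨?_, ?_⟩, ?_⟩ <;> nlinarith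
        · intro q hq
          simp only [Finset.mem_filter, Finset.mem_Icc] at hq
          show q * ell σ y / ell σ y = q
          rw [Nat.mul_div_cancel _ hl]
        · intro r hr
          simp only [Finset.mem_filter, Finset.mem_Icc] at hr
          show r / ell σ y * ell σ y = r
          exact Nat.div_mul_cancel hr.2
        · intro q hq
          rfl
    _ = ∑ r ∈ Finset.Icc 1 k, (if ell σ y ∣ r then 1 else 0) *
          (Finset.univ.filter fun T : Sym Y (k - r) => Sym.map ⇑σ T = T).card := by
        rw [Finset.sum_filter]
        refine Finset.sum_congr rfl fun r _ => ?_
        by_cases h : ell σ y ∣ r <;> simp [h]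

end aux

section newton

variable {ι : Type} [Fintype ι] [DecidableEq ι]

/-- The complete homogeneous sum of degree `k`. -/
noncomputable def hsum (lam : ι → ℂ) (k : ℕ) : ℂ :=
  ∑ s : Sym ι k, ((s : Multiset ι).map lam).prod

lemma sym_zero_coe (s : Sym ι 0) : (s : Multiset ι) = 0 :=
  Multiset.card_eq_zero.mp (Sym.card_coe (s := s))

lemma hsum_zero (lam : ι → ℂ) : hsum lam 0 = 1 := by
  unfold hsum
  rw [Fintype.sum_unique]
  rw [sym_zero_coe]
  simp

/-- removing `q` copies of `j`: weighted bijection. -/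
lemma sum_filter_count_ge (lam : ι → ℂ) (j : ι) (q k : ℕ) (hk : q ≤ k) :
    ∑ s ∈ (Finset.univ.filter fun s : Sym ι k => q ≤ (s : Multiset ι).count j),
      ((s : Multiset ι).map lam).prod
    = lam j ^ q * hsum lam (k - q) := by
  have hrep : ∀ s : Sym ι k, q ≤ (s : Multiset ι).count j →
      q • ({j} : Multiset ι) ≤ (s : Multiset ι) := by
    intro s hs
    rw [Multiset.le_iff_count]
    intro z
    rw [Multiset.count_nsmul, Multiset.count_singleton]
    by_cases hz : z = j
    · subst hz; simpa using hs
    · simp [hz]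
  have hcard : Multiset.card (q • ({j} : Multiset ι)) = q := by simp
  rw [hsum, Finset.mul_sum]
  refine Finset.sum_bij'
    (fun s hs => (⟨(s : Multiset ι) - q • ({j} : Multiset ι), ?_⟩ : Sym ι (k - q)))
    (fun t ht => (⟨(t : Multiset ι) + q • ({j} : Multiset ι), ?_⟩ : Sym ι k))
    ?_ ?_ ?_ ?_ ?_
  case refine_1 =>
    rw [Finset.mem_filter] at hs
    rw [Multiset.card_sub (hrep s hs.2), hcard, Sym.card_coe (s := s)]
  case refine_2 =>
    rw [Multiset.card_add, hcard, Sym.card_coe (s := t)]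
    omega
  case refine_3 =>
    intro s hs
    exact Finset.mem_univ _
  case refine_4 =>
    intro t ht
    apply Finset.mem_filter.mpr
    refine ⟨Finset.mem_univ _, ?_⟩
    show q ≤ ((t : Multiset ι) + q • ({j} : Multiset ι)).count j
    rw [Multiset.count_add, Multiset.count_nsmul, Multiset.count_singleton_self, mul_one]
    omega
  case refine_5 =>
    intro s hs
    rw [Finset.mem_filter] at hs
    exact Subtype.ext (tsub_add_cancel_of_le (hrep s hs.2))
  case refine_6 =>
    intro t ht
    exact Subtype.ext (add_tsub_cancel_right _ _)
  case refine_7 =>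
    intro s hs
    rw [Finset.mem_filter] at hs
    show ((s : Multiset ι).map lam).prod
      = lam j ^ q * (((s : Multiset ι) - q • ({j} : Multiset ι)).map lam).prod
    conv_lhs => rw [← tsub_add_cancel_of_le (hrep s hs.2)]
    rw [Multiset.map_add, Multiset.prod_add, Multiset.nsmul_singleton, Multiset.map_replicate,
      Multiset.prod_replicate, mul_comm]

lemma hsum_recurrence (lam : ι → ℂ) (k : ℕ) :
    (k : ℂ) * hsum lam k
      = ∑ r ∈ Finset.Icc 1 k, (∑ j, lam j ^ r) * hsum lam (k - r) := by
  have step1 : (k : ℂ) * hsum lam k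
      = ∑ j : ι, ∑ s : Sym ι k,
          ((s : Multiset ι).count j : ℂ) * ((s : Multiset ι).map lam).prod := by
    rw [hsum, Finset.mul_sum, Finset.sum_comm]
    refine Finset.sum_congr rfl fun s _ => ?_
    rw [← Finset.sum_mul]
    congr 1
    have : ∑ j : ι, ((s : Multiset ι).count j : ℂ)
        = ((∑ j : ι, (s : Multiset ι).count j : ℕ) : ℂ) := by push_cast; rfl
    rw [this, sum_count_univ, Sym.card_coe]
  have step2 : ∀ j : ι, ∀ s : Sym ι k,
      ((s : Multiset ι).count j : ℂ) * ((s : Multiset ι).map lam).prod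
      = ∑ q ∈ Finset.Icc 1 k,
          if q ≤ (s : Multiset ι).count j then ((s : Multiset ι).map lam).prod else 0 := by
    intro j s
    rw [Finset.sum_ite, Finset.sum_const_zero, add_zero, Finset.sum_const]
    have hc : (s : Multiset ι).count j ≤ k := by
      have h1 := Multiset.count_le_card j (s : Multiset ι)
      rwa [Sym.card_coe (s := s)] at h1
    have hfe : (Finset.Icc 1 k).filter (fun q => q ≤ (s : Multiset ι).count j)
        = Finset.Icc 1 ((s : Multiset ι).count j) := by
      ext q; simp only [Finset.mem_filter, Finset.mem_Icc]; omega
    rw [hfe, Nat.card_Icc, Nat.add_sub_cancel, nsmul_eq_mul]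
  calc (k : ℂ) * hsum lam k
      = ∑ j : ι, ∑ s : Sym ι k,
          ((s : Multiset ι).count j : ℂ) * ((s : Multiset ι).map lam).prod := step1
    _ = ∑ j : ι, ∑ q ∈ Finset.Icc 1 k,
          ∑ s ∈ (Finset.univ.filter fun s : Sym ι k => q ≤ (s : Multiset ι).count j),
            ((s : Multiset ι).map lam).prod := by
        refine Finset.sum_congr rfl fun j _ => ?_
        rw [Finset.sum_congr rfl (fun s (_ : s ∈ Finset.univ) => step2 j s), Finset.sum_comm]
        exact Finset.sum_congr rfl fun q _ => (Finset.sum_filter _ _).symm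
    _ = ∑ j : ι, ∑ q ∈ Finset.Icc 1 k, lam j ^ q * hsum lam (k - q) := by
        refine Finset.sum_congr rfl fun j _ => Finset.sum_congr rfl fun q hq => ?_
        rw [Finset.mem_Icc] at hq
        exact sum_filter_count_ge lam j q k hq.2
    _ = ∑ q ∈ Finset.Icc 1 k, ∑ j : ι, lam j ^ q * hsum lam (k - q) := Finset.sum_comm
    _ = ∑ r ∈ Finset.Icc 1 k, (∑ j, lam j ^ r) * hsum lam (k - r) := by
        refine Finset.sum_congr rfl fun q _ => ?_
        rw [Finset.sum_mul]

end newton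

section keysec

/-- The key lemma: if the fixed point counts of all powers of `σ` are given by power
sums of `lam`, then fixed multiset counts are given by complete homogeneous sums. -/
lemma key_lemma {Y ι : Type} [Fintype Y] [DecidableEq Y] [Fintype ι] [DecidableEq ι]
    (σ : Equiv.Perm Y) (lam : ι → ℂ)
    (hP : ∀ r, 1 ≤ r →
      (((Finset.univ.filter fun y : Y => (σ ^ r) y = y).card : ℕ) : ℂ) = ∑ j, lam j ^ r)
    (k : ℕ) :
    (((Finset.univ.filter fun S : Sym Y k => Sym.map ⇑σ S = S).card : ℕ) : ℂ)
      = hsum lam k := by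
  induction k using Nat.strong_induction_on with
  | _ k ih =>
    cases k with
    | zero =>
      rw [hsum_zero]
      have h1 : (Finset.univ.filter fun S : Sym Y 0 => Sym.map ⇑σ S = S) = Finset.univ := by
        apply Finset.filter_true_of_mem; intro S _; exact Subsingleton.elim _ _
      rw [h1, Finset.card_univ, Fintype.card_unique, Nat.cast_one]
    | succ n =>
      have hcan : ((n + 1 : ℕ) : ℂ) ≠ 0 :=
        Nat.cast_ne_zero.mpr (Nat.succ_ne_zero n)
      apply mul_left_cancel₀ hcan
      calc ((n + 1 : ℕ) : ℂ) *
            (((Finset.univ.filter fun S : Sym Y (n+1) => Sym.map ⇑σ S = S).card : ℕ) : ℂ)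
          = (((n + 1) *
              (Finset.univ.filter fun S : Sym Y (n+1) => Sym.map ⇑σ S = S).card : ℕ) : ℂ) := by
            push_cast; ring
        _ = ((∑ r ∈ Finset.Icc 1 (n+1),
              (Finset.univ.filter fun y : Y => (σ ^ r) y = y).card *
              (Finset.univ.filter fun T : Sym Y (n+1-r) => Sym.map ⇑σ T = T).card : ℕ) : ℂ) := by
            rw [fix_recurrence]
        _ = ∑ r ∈ Finset.Icc 1 (n+1),
              (((Finset.univ.filter fun y : Y => (σ ^ r) y = y).card : ℕ) : ℂ) *
              (((Finset.univ.filter fun T : Sym Y (n+1-r) => Sym.map ⇑σ T = T).card : ℕ) : ℂ) := by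
            push_cast; rfl
        _ = ∑ r ∈ Finset.Icc 1 (n+1), (∑ j, lam j ^ r) * hsum lam (n + 1 - r) := by
            refine Finset.sum_congr rfl fun r hr => ?_
            rw [Finset.mem_Icc] at hr
            rw [hP r hr.1, ih (n + 1 - r) (by omega)]
        _ = ((n + 1 : ℕ) : ℂ) * hsum lam (n+1) := by
            rw [← hsum_recurrence]

end keysec

section assembly

/-- The induced permutation on `Sym Y n`. -/
def symPerm {Y : Type} (σ : Equiv.Perm Y) (n : ℕ) : Equiv.Perm (Sym Y n) :=
  Sym.equivCongr σ

lemma symPerm_apply {Y : Type} (σ : Equiv.Perm Y) (n : ℕ) (S : Sym Y n) :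
    symPerm σ n S = Sym.map ⇑σ S := rfl

lemma symPerm_pow_apply {Y : Type} (σ : Equiv.Perm Y) (n r : ℕ) (S : Sym Y n) :
    ((symPerm σ n) ^ r) S = Sym.map ⇑(σ ^ r) S := by
  induction r generalizing S with
  | zero =>
    rw [pow_zero, pow_zero]
    show S = Sym.map ⇑(1 : Equiv.Perm Y) S
    rw [Equiv.Perm.coe_one, Sym.map_id]
  | succ r ih =>
    rw [pow_succ, Equiv.Perm.mul_apply, symPerm_apply, ih (Sym.map ⇑σ S), Sym.map_map, pow_succ,
      Equiv.Perm.coe_mul]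

lemma zpow_multiset_sum (z : ℂ) (hz : z ≠ 0) (M : Multiset ℤ) :
    z ^ M.sum = (M.map (fun d => z ^ d)).prod := by
  induction M using Multiset.induction_on with
  | empty => simp
  | cons a M ih =>
    rw [Multiset.sum_cons, Multiset.map_cons, Multiset.prod_cons, zpow_add₀ hz, ih]

lemma prod_multiset_swap {α β : Type} (s : Finset β) (M : Multiset α) (f : β → α → ℂ) :
    ∏ i ∈ s, (M.map (f i)).prod = (M.map (fun x => ∏ i ∈ s, f i x)).prod := by
  induction M using Multiset.induction_on with
  | empty => simp
  | cons a M ih =>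
    simp only [Multiset.map_cons, Multiset.prod_cons, ← ih, Finset.prod_mul_distrib]

lemma unit_pow_zpow (u : ℂˣ) (r : ℕ) (d : ℤ) : ((u : ℂ) ^ r) ^ d = ((u : ℂ) ^ d) ^ r := by
  have h : (u ^ r) ^ d = (u ^ d) ^ r := by
    rw [← zpow_natCast u r, ← zpow_mul, mul_comm, zpow_mul, zpow_natCast]
  calc ((u : ℂ) ^ r) ^ d = (((u ^ r : ℂˣ) : ℂ)) ^ d := by rw [Units.val_pow_eq_pow_val]
    _ = (((u ^ r) ^ d : ℂˣ) : ℂ) := (Units.val_zpow_eq_zpow_val _ _).symm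
    _ = (((u ^ d) ^ r : ℂˣ) : ℂ) := by rw [h]
    _ = (((u ^ d : ℂˣ) : ℂ)) ^ r := Units.val_pow_eq_pow_val _ _
    _ = ((u : ℂ) ^ d) ^ r := by rw [Units.val_zpow_eq_zpow_val]

end assembly

lemma bind_pure_eq_map {α β : Type} (g : α → β) (M : Multiset α) :
    (M >>= fun a => pure (g a)) = M.map g := by
  simp only [Multiset.bind_def, Multiset.pure_def, Multiset.bind_singleton]

lemma final_swap {N mm : ℕ} (z : Fin mm → ℂ) (hz : ∀ i, z i ≠ 0) (E : Fin N → Fin mm → ℤ)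
    (M : Multiset (Multiset (Fin N))) :
    (∏ i, z i ^ ((M.map (fun x => (x.map (fun j => E j i)).sum)).sum))
      = (M.map (fun x => (x.map (fun j => ∏ i, z i ^ E j i)).prod)).prod := by
  have inner : ∀ x : Multiset (Fin N),
      (∏ i, z i ^ ((x.map (fun j => E j i)).sum))
        = (x.map (fun j => ∏ i, z i ^ E j i)).prod := by
    intro x
    have h1 : ∀ i : Fin mm,
        z i ^ ((x.map (fun j => E j i)).sum)
          = (x.map (fun j => z i ^ E j i)).prod := by
      intro i
      rw [zpow_multiset_sum _ (hz i), Multiset.map_map]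
      rfl
    rw [Finset.prod_congr rfl (fun i (_ : i ∈ Finset.univ) => h1 i), prod_multiset_swap]
  have h2 : ∀ i : Fin mm,
      z i ^ ((M.map (fun x => (x.map (fun j => E j i)).sum)).sum)
        = (M.map (fun x => z i ^ ((x.map (fun j => E j i)).sum))).prod := by
    intro i
    rw [zpow_multiset_sum _ (hz i), Multiset.map_map]
    rfl
  rw [Finset.prod_congr rfl (fun i (_ : i ∈ Finset.univ) => h2 i), prod_multiset_swap]
  exact congrArg Multiset.prod (Multiset.map_congr rfl (fun x _ => inner x))

lemma natCard_setOf {α : Type} [Fintype α] (P : α → Prop) [DecidablePred P] :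
    Nat.card {x | P x} = (Finset.univ.filter P).card := by
  rw [Nat.card_eq_fintype_card, Fintype.card_subtype]
  simp only [Set.mem_setOf_eq]

/-- **Theorem (multisets of multisets).**
Suppose the triple `(X, X(u), 𝒞)` exhibits the CSP, where `𝒞 = C₁ × ⋯ × C_m`
is a product of finite cyclic groups with injective characters `ωᵢ` and
`X(u) = Σ_d a_d u^d` is a Laurent polynomial with nonnegative integer
coefficients.  Choose a list `D : Fin N → ℤ^m` of exponent vectors in which
each `d` occurs exactly `a_d` times (so `N = Σ_d a_d = |X|`).  The plethysm
`h_k[h_{m'}[X(u)]]` is then the sum, over `k`-element multisubsets `S` of the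
set of `m'`-element multisubsets of `Fin N`, of `u` raised to the total
exponent vector of `S`.  Then the triple consisting of the set
`Sym (Sym X m') k` of `k`-element multisubsets of the set of `m'`-element
multisubsets of `X` (with the induced action), `h_k[h_{m'}[X(u)]]`, and `𝒞`,
also exhibits the CSP. -/
theorem multisubsets_of_multisubsets_CSP (m : ℕ) (C : Fin m → Type)
    [∀ i, Group (C i)] [∀ i, Fintype (C i)] (hcyc : ∀ i, IsCyclic (C i))
    (X : Type) [Fintype X] [MulAction (∀ i, C i) X]
    (ω : ∀ i, C i →* ℂˣ) (hω : ∀ i, Function.Injective (ω i))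
    (a : (Fin m → ℤ) →₀ ℕ) (N : ℕ) (hN : Nat.card X = N)
    (D : Fin N → (Fin m → ℤ))
    (hD : ∀ d, (Finset.univ.filter (fun j => D j = d)).card = a d)
    (hCSP : ∀ c : ∀ i, C i,
      (Nat.card {x : X | c • x = x} : ℂ) =
      ∑ d ∈ a.support, (a d : ℂ) * ∏ i, ((ω i (c i) : ℂ) ^ (d i)))
    (m' k : ℕ) :
    ∀ c : ∀ i, C i,
      (Nat.card {S : Sym (Sym X m') k |
          Sym.map (fun s => Sym.map (fun x => c • x) s) S = S} : ℂ) =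
      ∑ S : Sym (Sym (Fin N) m') k, ∏ i,
        ((ω i (c i) : ℂ) ^
          (((S : Multiset (Sym (Fin N) m')).map
            (fun s => ((s : Multiset (Fin N)).map (fun j => D j i)).sum)).sum)) := by
  intro c
  classical
  set φ : (∀ i, C i) →* Equiv.Perm X := MulAction.toPermHom (∀ i, C i) X with hφ
  set lam : Fin N → ℂ := fun j => ∏ i, ((ω i (c i) : ℂ) ^ (D j i)) with hlam
  -- the support of `a` is the image of `D`
  have hsupp : a.support = Finset.univ.image D := by
    ext d
    simp only [Finsupp.mem_support_iff, Finset.mem_image]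
    constructor
    · intro hd
      have hpos : 0 < (Finset.univ.filter (fun j => D j = d)).card := by
        rw [hD d]; exact Nat.pos_of_ne_zero hd
      obtain ⟨j, hj⟩ := Finset.card_pos.mp hpos
      exact ⟨j, Finset.mem_univ j, (Finset.mem_filter.mp hj).2⟩
    · rintro ⟨j, -, rfl⟩
      rw [← hD (D j)]
      exact Finset.card_ne_zero_of_mem
        (Finset.mem_filter.mpr ⟨Finset.mem_univ j, rfl⟩)
  -- transfer of weighted sums over the support to sums over `Fin N`
  have htransfer : ∀ g : (Fin m → ℤ) → ℂ,
      (∑ d ∈ a.support, (a d : ℂ) * g d) = ∑ j : Fin N, g (D j) := by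
    intro g
    rw [hsupp]
    calc ∑ d ∈ Finset.univ.image D, (a d : ℂ) * g d
        = ∑ d ∈ Finset.univ.image D,
            (Finset.univ.filter fun j => D j = d).card • g d := by
          refine Finset.sum_congr rfl fun d _ => ?_
          rw [hD d, nsmul_eq_mul]
      _ = ∑ j : Fin N, g (D j) := (Finset.sum_comp g D).symm
  -- power sums of `lam` count fixed points of powers of `c`
  have hP1 : ∀ r, 1 ≤ r →
      (((Finset.univ.filter fun x : X => ((φ c) ^ r) x = x).card : ℕ) : ℂ)
        = ∑ j, lam j ^ r := by
    intro r hr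
    have h0 : (Finset.univ.filter fun x : X => ((φ c) ^ r) x = x)
        = (Finset.univ.filter fun x : X => (c ^ r) • x = x) := by
      apply Finset.filter_congr
      intro x _
      rw [← map_pow]
      rfl
    rw [h0, ← natCard_setOf, hCSP (c ^ r)]
    have hterm : ∀ d : Fin m → ℤ, (∏ i, ((ω i ((c ^ r) i) : ℂ) ^ (d i)))
        = (∏ i, ((ω i (c i) : ℂ) ^ (d i))) ^ r := by
      intro d
      rw [← Finset.prod_pow]
      refine Finset.prod_congr rfl fun i _ => ?_
      have h1 : (c ^ r) i = (c i) ^ r := rfl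
      rw [h1, map_pow, Units.val_pow_eq_pow_val, unit_pow_zpow]
    rw [Finset.sum_congr rfl (fun d (_ : d ∈ a.support) => by rw [hterm d]),
      htransfer (fun d => (∏ i, ((ω i (c i) : ℂ) ^ (d i))) ^ r)]
  -- level 2 : fixed `m'`-multisets of powers
  have L2 : ∀ t, 1 ≤ t →
      (((Finset.univ.filter fun S : Sym X m' => Sym.map ⇑((φ c) ^ t) S = S).card : ℕ) : ℂ)
        = ∑ s : Sym (Fin N) m', (((s : Multiset (Fin N)).map lam).prod) ^ t := by
    intro t ht
    have hp : ∀ r, 1 ≤ r →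
        (((Finset.univ.filter fun y : X => (((φ c) ^ t) ^ r) y = y).card : ℕ) : ℂ)
          = ∑ j, (lam j ^ t) ^ r := by
      intro r hr
      have h0 : (Finset.univ.filter fun y : X => (((φ c) ^ t) ^ r) y = y)
          = (Finset.univ.filter fun y : X => ((φ c) ^ (t * r)) y = y) := by
        apply Finset.filter_congr
        intro y _
        rw [← pow_mul]
      rw [h0, hP1 (t * r) (Nat.mul_pos ht hr)]
      refine Finset.sum_congr rfl fun j _ => ?_
      rw [← pow_mul]
    rw [key_lemma ((φ c) ^ t) (fun j => lam j ^ t) hp m']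
    unfold hsum
    refine Finset.sum_congr rfl fun s _ => ?_
    exact Multiset.prod_map_pow
  -- level 3 : fixed `k`-multisets of `m'`-multisets
  have L3 : (((Finset.univ.filter fun S : Sym (Sym X m') k =>
        Sym.map ⇑(symPerm (φ c) m') S = S).card : ℕ) : ℂ)
      = ∑ S : Sym (Sym (Fin N) m') k,
          ((S : Multiset (Sym (Fin N) m')).map
            (fun s => ((s : Multiset (Fin N)).map lam).prod)).prod := by
    have hp : ∀ r, 1 ≤ r →
        (((Finset.univ.filter fun S : Sym X m' =>
            ((symPerm (φ c) m') ^ r) S = S).card : ℕ) : ℂ)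
          = ∑ s : Sym (Fin N) m', (((s : Multiset (Fin N)).map lam).prod) ^ r := by
      intro r hr
      have h0 : (Finset.univ.filter fun S : Sym X m' => ((symPerm (φ c) m') ^ r) S = S)
          = (Finset.univ.filter fun S : Sym X m' => Sym.map ⇑((φ c) ^ r) S = S) := by
        apply Finset.filter_congr
        intro S _
        rw [symPerm_pow_apply]
      rw [h0]
      exact L2 r hr
    rw [key_lemma (symPerm (φ c) m')
      (fun s : Sym (Fin N) m' => ((s : Multiset (Fin N)).map lam).prod) hp k]
    unfold hsum
    refine Finset.sum_congr rfl fun S _ => ?_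
    rw [bind_pure_eq_map (fun a : Sym (Fin N) m' => (a : Multiset (Fin N)))
      (S : Multiset (Sym (Fin N) m')), Multiset.map_map]
    rfl
  -- final translation
  have hfun : (fun s : Sym X m' => Sym.map (fun x => c • x) s) = ⇑(symPerm (φ c) m') := rfl
  rw [hfun, natCard_setOf, L3]
  refine Finset.sum_congr rfl fun S _ => ?_
  rw [(final_swap (fun i => ((ω i (c i) : ℂ))) (fun i => Units.ne_zero _) D _)]
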